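/- Let Z₁, Z₂ ∈ R^{d×d} be symmetric matrices whose eigenvalues are ordered by decreasing absolute value, with |λ_r(Z₁)| > |λ_{r+1}(Z₁)| for some 1 ≤ r < d. Let U_{1,r}, U_{2,r} be matrices whose columns are eigenvectors of Z₁, Z₂ corresponding to the r largest-magnitude eigenvalues, and U_{2,r,⊥} an orthonormal complement of U_{2,r}. If ‖Z₁ − Z₂‖ ≤ (1 − 1/√2)(|λ_r(Z₁)| − |λ_{r+1}(Z₁)|), then for |||·||| equal to the spectral or Frobenius norm: |||U_{2,r,⊥}^T U_{1,r}||| ≤ √2 · |||(Z₁ − Z₂) U_{1,r}||| / (|λ_r(Z₁)| − |λ_{r+1}(Z₁)|). -/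

import Mathlib

open scoped BigOperators
open Matrix

noncomputable def frobNorm {d₁ d₂ : ℕ} (A : Matrix (Fin d₁) (Fin d₂) ℝ) : ℝ :=
  Real.sqrt (∑ i, ∑ j, A i j ^ 2)

noncomputable def vecNorm {m : ℕ} (y : Fin m → ℝ) : ℝ :=
  Real.sqrt (∑ i, y i ^ 2)

noncomputable def specNorm {d₁ d₂ : ℕ} (A : Matrix (Fin d₁) (Fin d₂) ℝ) : ℝ :=
  ‖LinearMap.toContinuousLinearMap (Matrix.toEuclideanLin A)‖

noncomputable def tinner {d : ℕ} (A B : Matrix (Fin d) (Fin d) ℝ) : ℝ :=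
  (A * Bᵀ).trace

noncomputable def sigmaMin {d₁ d₂ : ℕ} (A : Matrix (Fin d₁) (Fin d₂) ℝ) : ℝ :=
  sInf {s : ℝ | 0 < s ∧ ∃ i, s ^ 2 = (Matrix.isHermitian_conjTranspose_mul_self A).eigenvalues i}

noncomputable def projPerp {d : ℕ} (w : Fin d → ℝ) (Z : Matrix (Fin d) (Fin d) ℝ) :
    Matrix (Fin d) (Fin d) ℝ :=
  Z - tinner (Matrix.vecMulVec w w) Z • Matrix.vecMulVec w w

/-- The matrix formed by the first `r` columns of a `d × d` matrix. -/
def firstCols {d : ℕ} (r : ℕ) (hrd : r ≤ d) (U : Matrix (Fin d) (Fin d) ℝ) :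
    Matrix (Fin d) (Fin r) ℝ :=
  Matrix.of fun i j => U i ⟨j.1, lt_of_lt_of_le j.2 hrd⟩

/-- The matrix formed by the last `d - r` columns of a `d × d` matrix. -/
def lastCols {d : ℕ} (r : ℕ) (U : Matrix (Fin d) (Fin d) ℝ) :
    Matrix (Fin d) (Fin (d - r)) ℝ :=
  Matrix.of fun i j => U i ⟨r + j.1, by have h := j.2; omega⟩

lemma vecNorm_eq_norm {m : ℕ} (y : Fin m → ℝ) :
    vecNorm y = ‖(WithLp.equiv 2 (Fin m → ℝ)).symm y‖ := by
  rw [EuclideanSpace.norm_eq, vecNorm]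
  congr 1; apply Finset.sum_congr rfl; intro i _
  simp [Real.norm_eq_abs, sq_abs]

lemma vecNorm_nonneg {m : ℕ} (y : Fin m → ℝ) : 0 ≤ vecNorm y := Real.sqrt_nonneg _

lemma specNorm_nonneg {d₁ d₂ : ℕ} (A : Matrix (Fin d₁) (Fin d₂) ℝ) : 0 ≤ specNorm A :=
  norm_nonneg _

lemma vecNorm_mulVec_le {d₁ d₂ : ℕ} (A : Matrix (Fin d₁) (Fin d₂) ℝ) (x : Fin d₂ → ℝ) :
    vecNorm (A *ᵥ x) ≤ specNorm A * vecNorm x := by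
  have h := (LinearMap.toContinuousLinearMap (Matrix.toEuclideanLin A)).le_opNorm
    ((WithLp.equiv 2 (Fin d₂ → ℝ)).symm x)
  rw [vecNorm_eq_norm, vecNorm_eq_norm]
  simpa [specNorm] using h

lemma specNorm_le {d₁ d₂ : ℕ} {A : Matrix (Fin d₁) (Fin d₂) ℝ} {c : ℝ} (h0 : 0 ≤ c)
    (h : ∀ x, vecNorm (A *ᵥ x) ≤ c * vecNorm x) : specNorm A ≤ c := by
  apply ContinuousLinearMap.opNorm_le_bound _ h0
  intro x
  have := h ((WithLp.equiv 2 (Fin d₂ → ℝ)) x)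
  rw [vecNorm_eq_norm, vecNorm_eq_norm] at this
  simpa [Matrix.toEuclideanLin_apply] using this

lemma specNorm_mul_le {a b c : ℕ} (A : Matrix (Fin a) (Fin b) ℝ) (B : Matrix (Fin b) (Fin c) ℝ) :
    specNorm (A * B) ≤ specNorm A * specNorm B := by
  apply specNorm_le (mul_nonneg (specNorm_nonneg A) (specNorm_nonneg B))
  intro x
  rw [← Matrix.mulVec_mulVec]
  calc vecNorm (A *ᵥ (B *ᵥ x)) ≤ specNorm A * vecNorm (B *ᵥ x) := vecNorm_mulVec_le A _
    _ ≤ specNorm A * (specNorm B * vecNorm x) :=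
      mul_le_mul_of_nonneg_left (vecNorm_mulVec_le B x) (specNorm_nonneg A)
    _ = specNorm A * specNorm B * vecNorm x := by ring

lemma specNorm_add_le {a b : ℕ} (A B : Matrix (Fin a) (Fin b) ℝ) :
    specNorm (A + B) ≤ specNorm A + specNorm B := by
  unfold specNorm
  rw [map_add, map_add]
  exact norm_add_le _ _

lemma dotProduct_eq_sum_sq {m : ℕ} (y : Fin m → ℝ) : y ⬝ᵥ y = ∑ i, y i ^ 2 := by
  simp [dotProduct, sq]

lemma vecNorm_sq {m : ℕ} (y : Fin m → ℝ) : vecNorm y ^ 2 = ∑ i, y i ^ 2 := by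
  rw [vecNorm, Real.sq_sqrt]
  positivity

-- Cauchy-Schwarz for dot products

lemma dot_le_vecNorm_mul {m : ℕ} (x y : Fin m → ℝ) : x ⬝ᵥ y ≤ vecNorm x * vecNorm y := by
  have h := real_inner_le_norm ((WithLp.equiv 2 (Fin m → ℝ)).symm x)
    ((WithLp.equiv 2 (Fin m → ℝ)).symm y)
  rw [vecNorm_eq_norm, vecNorm_eq_norm]
  simpa [PiLp.inner_apply, RCLike.inner_apply, dotProduct, mul_comm] using h

lemma mulVec_dot_self {a b : ℕ} (B : Matrix (Fin a) (Fin b) ℝ) (y : Fin b → ℝ) :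
    (B *ᵥ y) ⬝ᵥ (B *ᵥ y) = (y ᵥ* (Bᵀ * B)) ⬝ᵥ y := by
  rw [Matrix.dotProduct_mulVec, ← Matrix.vecMul_transpose, ← Matrix.vecMul_vecMul]

lemma vecNorm_mulVec_iso {a b : ℕ} {B : Matrix (Fin a) (Fin b) ℝ} (hB : Bᵀ * B = 1)
    (y : Fin b → ℝ) : vecNorm (B *ᵥ y) = vecNorm y := by
  unfold vecNorm
  congr 1
  rw [← dotProduct_eq_sum_sq, ← dotProduct_eq_sum_sq, mulVec_dot_self, hB]
  simp

lemma vecNorm_transpose_mulVec_le {a b : ℕ} {B : Matrix (Fin a) (Fin b) ℝ} (hB : Bᵀ * B = 1)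
    (x : Fin a → ℝ) : vecNorm (Bᵀ *ᵥ x) ≤ vecNorm x := by
  set y := Bᵀ *ᵥ x with hy
  have h1 : y ⬝ᵥ y = x ⬝ᵥ (B *ᵥ y) := by
    rw [hy, Matrix.mulVec_transpose, Matrix.dotProduct_mulVec]
  have h2 : vecNorm (B *ᵥ y) = vecNorm y := vecNorm_mulVec_iso hB y
  have h3 : vecNorm y ^ 2 ≤ vecNorm x * vecNorm y := by
    rw [vecNorm_sq, ← dotProduct_eq_sum_sq, h1, ← h2]
    exact dot_le_vecNorm_mul _ _
  rcases eq_or_lt_of_le (vecNorm_nonneg y) with h | h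
  · rw [← h]; exact vecNorm_nonneg x
  · nlinarith [h3]

lemma specNorm_transpose_le_one {a b : ℕ} {B : Matrix (Fin a) (Fin b) ℝ} (hB : Bᵀ * B = 1) :
    specNorm Bᵀ ≤ 1 := by
  apply specNorm_le zero_le_one
  intro x
  rw [one_mul]
  exact vecNorm_transpose_mulVec_le hB x

lemma specNorm_diagonal_le {m : ℕ} {v : Fin m → ℝ} {c : ℝ} (h0 : 0 ≤ c)
    (h : ∀ i, |v i| ≤ c) : specNorm (Matrix.diagonal v) ≤ c := by
  apply specNorm_le h0
  intro x
  unfold vecNorm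
  rw [← Real.sqrt_sq h0, ← Real.sqrt_mul (by positivity)]
  apply Real.sqrt_le_sqrt
  rw [Finset.mul_sum]
  apply Finset.sum_le_sum
  intro i _
  rw [Matrix.mulVec_diagonal]
  calc (v i * x i) ^ 2 = v i ^ 2 * x i ^ 2 := by ring
    _ ≤ c ^ 2 * x i ^ 2 := by
        apply mul_le_mul_of_nonneg_right _ (sq_nonneg _)
        calc v i ^ 2 = |v i| ^ 2 := (sq_abs _).symm
          _ ≤ c ^ 2 := by apply pow_le_pow_left₀ (abs_nonneg _) (h i)

lemma vecNorm_sub_le {m : ℕ} (x y : Fin m → ℝ) : vecNorm (x - y) ≤ vecNorm x + vecNorm y := by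
  rw [vecNorm_eq_norm, vecNorm_eq_norm, vecNorm_eq_norm]
  exact norm_sub_le ((WithLp.equiv 2 (Fin m → ℝ)).symm x) ((WithLp.equiv 2 (Fin m → ℝ)).symm y)

lemma mul_submatrix_right {a d c d' : ℕ} (M : Matrix (Fin a) (Fin d) ℝ)
    (N : Matrix (Fin d) (Fin d') ℝ) (e : Fin c → Fin d') :
    M * N.submatrix id e = (M * N).submatrix id e := by
  ext i j
  simp [Matrix.mul_apply]

lemma submatrix_orth {d c : ℕ} {U : Matrix (Fin d) (Fin d) ℝ} (hU : Uᵀ * U = 1)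
    {e : Fin c → Fin d} (he : Function.Injective e) :
    (U.submatrix id e)ᵀ * (U.submatrix id e) = 1 := by
  ext i j
  have h2 : (Uᵀ * U) (e i) (e j) = (1 : Matrix (Fin d) (Fin d) ℝ) (e i) (e j) := by rw [hU]
  simp only [Matrix.mul_apply, Matrix.transpose_apply, Matrix.submatrix_apply, id_eq]
  simp only [Matrix.mul_apply, Matrix.transpose_apply] at h2
  rw [h2]
  simp [Matrix.one_apply, he.eq_iff]

lemma eig_cols {d c : ℕ} {U Z : Matrix (Fin d) (Fin d) ℝ} {lam : Fin d → ℝ}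
    (hU : Uᵀ * U = 1) (hZ : Z = U * Matrix.diagonal lam * Uᵀ) (e : Fin c → Fin d) :
    Z * U.submatrix id e = U.submatrix id e * Matrix.diagonal (lam ∘ e) := by
  have hZU : Z * U = U * Matrix.diagonal lam := by
    rw [hZ, Matrix.mul_assoc, Matrix.mul_assoc, hU, Matrix.mul_one]
  rw [mul_submatrix_right, hZU]
  ext i j
  simp [Matrix.mul_diagonal]

lemma symm_of_eig {d : ℕ} {U Z : Matrix (Fin d) (Fin d) ℝ} {lam : Fin d → ℝ}
    (hZ : Z = U * Matrix.diagonal lam * Uᵀ) : Zᵀ = Z := by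
  rw [hZ]
  simp [Matrix.transpose_mul, Matrix.diagonal_transpose, Matrix.mul_assoc]

lemma eig_rows {d c : ℕ} {U Z : Matrix (Fin d) (Fin d) ℝ} {lam : Fin d → ℝ}
    (hU : Uᵀ * U = 1) (hZ : Z = U * Matrix.diagonal lam * Uᵀ) (e : Fin c → Fin d) :
    (U.submatrix id e)ᵀ * Z = Matrix.diagonal (lam ∘ e) * (U.submatrix id e)ᵀ := by
  have h := congrArg Matrix.transpose (eig_cols hU hZ e)
  rw [Matrix.transpose_mul, Matrix.transpose_mul, symm_of_eig hZ,
    Matrix.diagonal_transpose] at h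
  exact h

lemma sqrt_mul_sq_le {a' s s' : ℝ} (ha : 0 ≤ a') (hs : 0 ≤ s) (h : a' ^ 2 * s ≤ s') :
    a' * Real.sqrt s ≤ Real.sqrt s' := by
  have : Real.sqrt (a' ^ 2 * s) ≤ Real.sqrt s' := Real.sqrt_le_sqrt h
  rwa [Real.sqrt_mul (by positivity), Real.sqrt_sq ha] at this

lemma weyl_bound {d r : ℕ} (hrd : r < d)
    (Z₁ Z₂ U₁ U₂ : Matrix (Fin d) (Fin d) ℝ) (lam₁ lam₂ : Fin d → ℝ)
    (hU₁ : U₁ᵀ * U₁ = 1) (hU₂ : U₂ᵀ * U₂ = 1)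
    (hZ₁ : Z₁ = U₁ * Matrix.diagonal lam₁ * U₁ᵀ)
    (hZ₂ : Z₂ = U₂ * Matrix.diagonal lam₂ * U₂ᵀ)
    (hsort₁ : ∀ i j : Fin d, i ≤ j → |lam₁ j| ≤ |lam₁ i|)
    (hsort₂ : ∀ i j : Fin d, i ≤ j → |lam₂ j| ≤ |lam₂ i|) :
    |lam₂ ⟨r, hrd⟩| ≤ |lam₁ ⟨r, hrd⟩| + specNorm (Z₁ - Z₂) := by
  obtain ⟨a, ha⟩ : ∃ a, a = |lam₂ ⟨r, hrd⟩| := ⟨_, rfl⟩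
  obtain ⟨t, ht⟩ : ∃ t, t = |lam₁ ⟨r, hrd⟩| := ⟨_, rfl⟩
  obtain ⟨ε, hε⟩ : ∃ e, e = specNorm (Z₁ - Z₂) := ⟨_, rfl⟩
  rw [← ha, ← ht, ← hε]
  obtain ⟨e₂, he₂⟩ : ∃ e₂ : Fin (r + 1) → Fin d, e₂ = fun j => ⟨j.1, by omega⟩ := ⟨_, rfl⟩
  have he₂inj : Function.Injective e₂ := by
    intro x y hxy
    apply Fin.ext
    rw [he₂] at hxy
    simpa [Fin.ext_iff] using hxy
  obtain ⟨B₂, hB₂def⟩ : ∃ B₂, B₂ = U₂.submatrix id e₂ := ⟨_, rfl⟩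
  have hB₂ : B₂ᵀ * B₂ = 1 := by rw [hB₂def]; exact submatrix_orth hU₂ he₂inj
  obtain ⟨M, hM⟩ : ∃ M : Matrix (Fin r) (Fin (r + 1)) ℝ,
      M = Matrix.of (fun i j => (U₁ᵀ * B₂) ⟨i.1, by omega⟩ j) := ⟨_, rfl⟩
  have hnotinj : ¬ Function.Injective (Matrix.mulVecLin M) := by
    intro h
    have := LinearMap.finrank_le_finrank_of_injective h
    rw [Module.finrank_fin_fun, Module.finrank_fin_fun] at this
    omega
  rw [Function.not_injective_iff] at hnotinj
  obtain ⟨x, y, hxy, hne⟩ := hnotinj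
  obtain ⟨c, hc⟩ : ∃ c, c = x - y := ⟨_, rfl⟩
  have hc0 : c ≠ 0 := by rw [hc]; exact sub_ne_zero_of_ne hne
  have hMc : M *ᵥ c = 0 := by
    have h2 : Matrix.mulVecLin M (x - y) = 0 := by rw [map_sub, hxy]; simp
    rw [hc]
    simpa [Matrix.mulVecLin_apply] using h2
  obtain ⟨v, hv⟩ : ∃ v, v = B₂ *ᵥ c := ⟨_, rfl⟩
  have hvc : vecNorm v = vecNorm c := by rw [hv]; exact vecNorm_mulVec_iso hB₂ c
  have hcpos : 0 < vecNorm c := by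
    rw [vecNorm]
    apply Real.sqrt_pos.mpr
    obtain ⟨i, hi⟩ := Function.ne_iff.mp hc0
    exact Finset.sum_pos' (fun j _ => sq_nonneg _)
      ⟨i, Finset.mem_univ i, pow_two_pos_of_ne_zero (by simpa using hi)⟩
  have hvpos : 0 < vecNorm v := by rw [hvc]; exact hcpos
  -- lower bound on ‖Z₂ v‖
  have hZ₂v : Z₂ *ᵥ v = B₂ *ᵥ (Matrix.diagonal (lam₂ ∘ e₂) *ᵥ c) := by
    rw [hv, Matrix.mulVec_mulVec, Matrix.mulVec_mulVec, hB₂def, eig_cols hU₂ hZ₂ e₂]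
  have hlow : a * vecNorm v ≤ vecNorm (Z₂ *ᵥ v) := by
    have h1 : vecNorm (Z₂ *ᵥ v) = vecNorm (Matrix.diagonal (lam₂ ∘ e₂) *ᵥ c) := by
      rw [hZ₂v]; exact vecNorm_mulVec_iso hB₂ _
    rw [h1, hvc]
    unfold vecNorm
    apply sqrt_mul_sq_le (by rw [ha]; exact abs_nonneg _) (by positivity)
    rw [Finset.mul_sum]
    apply Finset.sum_le_sum
    intro j _
    rw [Matrix.mulVec_diagonal]
    have hj : |lam₂ ⟨r, hrd⟩| ≤ |lam₂ (e₂ j)| := by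
      apply hsort₂
      rw [he₂]
      exact Fin.mk_le_mk.mpr (by omega)
    calc a ^ 2 * c j ^ 2 ≤ |lam₂ (e₂ j)| ^ 2 * c j ^ 2 := by
          apply mul_le_mul_of_nonneg_right _ (sq_nonneg _)
          apply pow_le_pow_left₀ (by rw [ha]; exact abs_nonneg _) (ha ▸ hj)
      _ = ((lam₂ ∘ e₂) j * c j) ^ 2 := by
          rw [Function.comp_apply, mul_pow, sq_abs]
  -- upper bound on ‖Z₁ v‖
  obtain ⟨u, hu⟩ : ∃ u, u = U₁ᵀ *ᵥ v := ⟨_, rfl⟩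
  have hU₁U₁ : U₁ * U₁ᵀ = 1 := mul_eq_one_comm.mp hU₁
  have huv : vecNorm u = vecNorm v := by
    have h : (U₁ᵀ)ᵀ * U₁ᵀ = 1 := by rw [Matrix.transpose_transpose]; exact hU₁U₁
    rw [hu]
    exact vecNorm_mulVec_iso h v
  have hu0 : ∀ i : Fin d, i.1 < r → u i = 0 := by
    intro i hi
    have hu' : u = (U₁ᵀ * B₂) *ᵥ c := by rw [hu, hv, Matrix.mulVec_mulVec]
    have h0 : (M *ᵥ c) ⟨i.1, hi⟩ = 0 := by rw [hMc]; rfl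
    rw [hu', ← h0, hM]
    simp only [Matrix.mulVec, dotProduct, Matrix.of_apply]
  have hZ₁v : Z₁ *ᵥ v = U₁ *ᵥ (Matrix.diagonal lam₁ *ᵥ u) := by
    rw [hu, Matrix.mulVec_mulVec, Matrix.mulVec_mulVec]
    congr 1
  have hhigh : vecNorm (Z₁ *ᵥ v) ≤ t * vecNorm v := by
    have h1 : vecNorm (Z₁ *ᵥ v) = vecNorm (Matrix.diagonal lam₁ *ᵥ u) := by
      rw [hZ₁v]; exact vecNorm_mulVec_iso hU₁ _
    rw [h1, ← huv]
    unfold vecNorm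
    rw [← Real.sqrt_sq (mul_nonneg (ht ▸ abs_nonneg _) (Real.sqrt_nonneg _) :
      (0:ℝ) ≤ t * Real.sqrt (∑ i, u i ^ 2)), mul_pow, Real.sq_sqrt (by positivity)]
    apply Real.sqrt_le_sqrt
    rw [Finset.mul_sum]
    apply Finset.sum_le_sum
    intro i _
    rw [Matrix.mulVec_diagonal]
    by_cases hi : i.1 < r
    · rw [hu0 i hi]
      simp [sq_nonneg]
    · have hle : |lam₁ i| ≤ t := by
        rw [ht]
        apply hsort₁
        exact Fin.mk_le_mk.mpr (by omega)
      calc (lam₁ i * u i) ^ 2 = |lam₁ i| ^ 2 * u i ^ 2 := by rw [sq_abs]; ring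
        _ ≤ t ^ 2 * u i ^ 2 :=
          mul_le_mul_of_nonneg_right
            (pow_le_pow_left₀ (abs_nonneg _) hle 2) (sq_nonneg _)
  -- combine
  have htri : vecNorm (Z₂ *ᵥ v) ≤ vecNorm (Z₁ *ᵥ v) + ε * vecNorm v := by
    have hsplit : Z₂ *ᵥ v = Z₁ *ᵥ v - (Z₁ - Z₂) *ᵥ v := by
      rw [Matrix.sub_mulVec, sub_sub_cancel]
    rw [hsplit]
    calc vecNorm (Z₁ *ᵥ v - (Z₁ - Z₂) *ᵥ v)
        ≤ vecNorm (Z₁ *ᵥ v) + vecNorm ((Z₁ - Z₂) *ᵥ v) := vecNorm_sub_le _ _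
      _ ≤ vecNorm (Z₁ *ᵥ v) + ε * vecNorm v := by
          apply add_le_add_right
          rw [hε]
          exact vecNorm_mulVec_le _ _
  have hfin : a * vecNorm v ≤ (t + ε) * vecNorm v := by
    calc a * vecNorm v ≤ vecNorm (Z₂ *ᵥ v) := hlow
      _ ≤ vecNorm (Z₁ *ᵥ v) + ε * vecNorm v := htri
      _ ≤ t * vecNorm v + ε * vecNorm v := add_le_add_left hhigh _
      _ = (t + ε) * vecNorm v := by ring
  exact le_of_mul_le_mul_right hfin hvpos

lemma frobNorm_nonneg {d₁ d₂ : ℕ} (A : Matrix (Fin d₁) (Fin d₂) ℝ) : 0 ≤ frobNorm A :=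
  Real.sqrt_nonneg _

lemma frob_contract {a b c : ℕ} {B : Matrix (Fin a) (Fin b) ℝ} (hB : Bᵀ * B = 1)
    (M : Matrix (Fin a) (Fin c) ℝ) : frobNorm (Bᵀ * M) ≤ frobNorm M := by
  unfold frobNorm
  apply Real.sqrt_le_sqrt
  rw [Finset.sum_comm]
  rw [Finset.sum_comm (s := Finset.univ) (t := Finset.univ) (f := fun i j => M i j ^ 2)]
  apply Finset.sum_le_sum
  intro j _
  have h := vecNorm_transpose_mulVec_le hB (fun k => M k j)
  have h2 := pow_le_pow_left₀ (vecNorm_nonneg _) h 2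
  rw [vecNorm_sq, vecNorm_sq] at h2
  calc ∑ i, (Bᵀ * M) i j ^ 2 = ∑ i, (Bᵀ *ᵥ fun k => M k j) i ^ 2 := by
        apply Finset.sum_congr rfl
        intro i _
        rw [Matrix.mul_apply, Matrix.mulVec]
        rfl
    _ ≤ ∑ k, M k j ^ 2 := h2

lemma sylvester_bound {p q : ℕ} (X R : Matrix (Fin p) (Fin q) ℝ) (mu : Fin p → ℝ)
    (nu : Fin q → ℝ) {aa bb : ℝ} (ha : 0 ≤ aa) (hb : 0 < bb) (hab : aa < bb)
    (hmu : ∀ i, |mu i| ≤ aa) (hnu : ∀ j, bb ≤ |nu j|)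
    (hXR : X * Matrix.diagonal nu - Matrix.diagonal mu * X = R) :
    specNorm X * (bb - aa) ≤ specNorm R ∧ frobNorm X * (bb - aa) ≤ frobNorm R := by
  have hnu0 : ∀ j, nu j ≠ 0 := fun j => by
    intro h
    have := hnu j
    rw [h, abs_zero] at this
    linarith
  constructor
  · -- spectral norm part
    have hDD : Matrix.diagonal nu * Matrix.diagonal (fun j => (nu j)⁻¹) = 1 := by
      rw [Matrix.diagonal_mul_diagonal]
      have : (fun j => nu j * (nu j)⁻¹) = fun _ => (1:ℝ) :=
        funext fun j => mul_inv_cancel₀ (hnu0 j)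
      rw [this, Matrix.diagonal_one]
    have h1 : X * Matrix.diagonal nu = Matrix.diagonal mu * X + R := by
      rw [← hXR]; abel
    have hXdecomp : X = Matrix.diagonal mu * X * Matrix.diagonal (fun j => (nu j)⁻¹)
        + R * Matrix.diagonal (fun j => (nu j)⁻¹) := by
      calc X = X * 1 := (Matrix.mul_one X).symm
        _ = X * (Matrix.diagonal nu * Matrix.diagonal (fun j => (nu j)⁻¹)) := by rw [hDD]
        _ = (X * Matrix.diagonal nu) * Matrix.diagonal (fun j => (nu j)⁻¹) := by
            rw [Matrix.mul_assoc]
        _ = (Matrix.diagonal mu * X + R) * Matrix.diagonal (fun j => (nu j)⁻¹) := by rw [h1]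
        _ = _ := by rw [Matrix.add_mul]
    have hDinv : specNorm (Matrix.diagonal (fun j => (nu j)⁻¹)) ≤ 1 / bb := by
      apply specNorm_diagonal_le (by positivity)
      intro j
      rw [abs_inv, one_div]
      exact inv_anti₀ hb (hnu j)
    have hDmu : specNorm (Matrix.diagonal mu) ≤ aa := specNorm_diagonal_le ha hmu
    have m1 : specNorm (Matrix.diagonal mu * X * Matrix.diagonal (fun j => (nu j)⁻¹))
        ≤ aa * specNorm X * (1 / bb) := by
      calc specNorm (Matrix.diagonal mu * X * Matrix.diagonal (fun j => (nu j)⁻¹))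
          ≤ specNorm (Matrix.diagonal mu * X)
            * specNorm (Matrix.diagonal (fun j => (nu j)⁻¹)) := specNorm_mul_le _ _
        _ ≤ (aa * specNorm X) * (1 / bb) := by
            apply mul_le_mul _ hDinv (specNorm_nonneg _)
              (mul_nonneg ha (specNorm_nonneg _))
            exact le_trans (specNorm_mul_le _ _)
              (mul_le_mul_of_nonneg_right hDmu (specNorm_nonneg _))
    have m2 : specNorm (R * Matrix.diagonal (fun j => (nu j)⁻¹))
        ≤ specNorm R * (1 / bb) := by
      calc specNorm (R * Matrix.diagonal (fun j => (nu j)⁻¹))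
          ≤ specNorm R * specNorm (Matrix.diagonal (fun j => (nu j)⁻¹)) :=
            specNorm_mul_le _ _
        _ ≤ specNorm R * (1 / bb) :=
            mul_le_mul_of_nonneg_left hDinv (specNorm_nonneg _)
    have key : specNorm X ≤ aa * specNorm X * (1 / bb) + specNorm R * (1 / bb) := by
      calc specNorm X = specNorm (Matrix.diagonal mu * X * Matrix.diagonal (fun j => (nu j)⁻¹)
            + R * Matrix.diagonal (fun j => (nu j)⁻¹)) := by rw [← hXdecomp]
        _ ≤ _ := le_trans (specNorm_add_le _ _) (add_le_add m1 m2)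
    have key2 : specNorm X * bb ≤ aa * specNorm X + specNorm R := by
      have h2 := mul_le_mul_of_nonneg_right key hb.le
      calc specNorm X * bb
          ≤ (aa * specNorm X * (1 / bb) + specNorm R * (1 / bb)) * bb := h2
        _ = aa * specNorm X + specNorm R := by field_simp
    nlinarith [key2]
  · -- Frobenius norm part
    have hXij : ∀ i j, |X i j| * (bb - aa) ≤ |R i j| := by
      intro i j
      have hid : X i j * (nu j - mu i) = R i j := by
        have h2 : (X * Matrix.diagonal nu - Matrix.diagonal mu * X) i j = R i j := by
          rw [hXR]
        rw [Matrix.sub_apply, Matrix.mul_diagonal, Matrix.diagonal_mul] at h2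
        linarith [h2]
      have habs : bb - aa ≤ |nu j - mu i| := by
        have := abs_sub_abs_le_abs_sub (nu j) (mu i)
        have h3 := hnu j
        have h4 := hmu i
        linarith
      calc |X i j| * (bb - aa) ≤ |X i j| * |nu j - mu i| :=
            mul_le_mul_of_nonneg_left habs (abs_nonneg _)
        _ = |X i j * (nu j - mu i)| := (abs_mul _ _).symm
        _ = |R i j| := by rw [hid]
    unfold frobNorm
    rw [mul_comm]
    apply sqrt_mul_sq_le (by linarith) (by positivity)
    rw [Finset.mul_sum]
    apply Finset.sum_le_sum
    intro i _
    rw [Finset.mul_sum]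
    apply Finset.sum_le_sum
    intro j _
    calc (bb - aa) ^ 2 * X i j ^ 2 = (|X i j| * (bb - aa)) ^ 2 := by
          rw [mul_pow, sq_abs]; ring
      _ ≤ |R i j| ^ 2 := pow_le_pow_left₀ (mul_nonneg (abs_nonneg _) (by linarith)) (hXij i j) 2
      _ = R i j ^ 2 := sq_abs _

lemma final_div {x R M δ g s2 : ℝ} (hδ : 0 < δ) (hx0 : 0 ≤ x) (hs2 : 0 ≤ s2)
    (hRM : R ≤ M) (hx : x * g ≤ R) (h2 : δ ≤ s2 * g) : x ≤ s2 * M / δ := by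
  rw [le_div_iff₀ hδ]
  nlinarith [mul_le_mul_of_nonneg_left h2 hx0, mul_le_mul_of_nonneg_left hx hs2,
    mul_le_mul_of_nonneg_left hRM hs2]

theorem statement13 {d r : ℕ} (hr1 : 1 ≤ r) (hrd : r < d)
    (Z₁ Z₂ U₁ U₂ : Matrix (Fin d) (Fin d) ℝ) (lam₁ lam₂ : Fin d → ℝ)
    (hU₁ : U₁ᵀ * U₁ = 1) (hU₂ : U₂ᵀ * U₂ = 1)
    (hZ₁ : Z₁ = U₁ * Matrix.diagonal lam₁ * U₁ᵀ)
    (hZ₂ : Z₂ = U₂ * Matrix.diagonal lam₂ * U₂ᵀ)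
    (hsort₁ : ∀ i j : Fin d, i ≤ j → |lam₁ j| ≤ |lam₁ i|)
    (hsort₂ : ∀ i j : Fin d, i ≤ j → |lam₂ j| ≤ |lam₂ i|)
    (hgap : |lam₁ ⟨r, hrd⟩| < |lam₁ ⟨r - 1, by omega⟩|)
    (hclose : specNorm (Z₁ - Z₂)
      ≤ (1 - 1 / Real.sqrt 2) * (|lam₁ ⟨r - 1, by omega⟩| - |lam₁ ⟨r, hrd⟩|)) :
    specNorm ((lastCols r U₂)ᵀ * firstCols r hrd.le U₁)
        ≤ Real.sqrt 2 * specNorm ((Z₁ - Z₂) * firstCols r hrd.le U₁)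
            / (|lam₁ ⟨r - 1, by omega⟩| - |lam₁ ⟨r, hrd⟩|) ∧
      frobNorm ((lastCols r U₂)ᵀ * firstCols r hrd.le U₁)
        ≤ Real.sqrt 2 * frobNorm ((Z₁ - Z₂) * firstCols r hrd.le U₁)
            / (|lam₁ ⟨r - 1, by omega⟩| - |lam₁ ⟨r, hrd⟩|) := by
  -- abbreviations
  have hrm1 : r - 1 < d := by omega
  obtain ⟨t, ht⟩ : ∃ t, t = |lam₁ ⟨r, hrd⟩| := ⟨_, rfl⟩
  obtain ⟨b, hb⟩ : ∃ b, b = |lam₁ ⟨r - 1, hrm1⟩| := ⟨_, rfl⟩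
  obtain ⟨a, ha⟩ : ∃ a, a = |lam₂ ⟨r, hrd⟩| := ⟨_, rfl⟩
  obtain ⟨ε, hε⟩ : ∃ e, e = specNorm (Z₁ - Z₂) := ⟨_, rfl⟩
  have ht0 : 0 ≤ t := ht ▸ abs_nonneg _
  have ha0 : 0 ≤ a := ha ▸ abs_nonneg _
  have hε0 : 0 ≤ ε := hε ▸ specNorm_nonneg _
  have hδ : 0 < b - t := by rw [hb, ht]; linarith [hgap]
  have hbpos : 0 < b := by linarith
  have hεle : ε ≤ (1 - 1 / Real.sqrt 2) * (b - t) := by rw [hε, hb, ht]; exact hclose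
  have haw : a ≤ t + ε := by
    rw [ha, ht, hε]
    exact weyl_bound hrd Z₁ Z₂ U₁ U₂ lam₁ lam₂ hU₁ hU₂ hZ₁ hZ₂ hsort₁ hsort₂
  have hs2pos : (0:ℝ) < Real.sqrt 2 := Real.sqrt_pos.mpr (by norm_num)
  have hinv : Real.sqrt 2 * (1 / Real.sqrt 2) = 1 := mul_one_div_cancel hs2pos.ne'
  -- the gap bound : b - t ≤ √2 * (b - a)
  have hgap2 : b - t ≤ Real.sqrt 2 * (b - a) := by
    have f2 : Real.sqrt 2 * ε ≤ Real.sqrt 2 * ((1 - 1 / Real.sqrt 2) * (b - t)) :=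
      mul_le_mul_of_nonneg_left hεle hs2pos.le
    have f3 : Real.sqrt 2 * ((1 - 1 / Real.sqrt 2) * (b - t))
        = Real.sqrt 2 * (b - t) - Real.sqrt 2 * (1 / Real.sqrt 2) * (b - t) := by ring
    rw [f3, hinv, one_mul] at f2
    nlinarith [mul_le_mul_of_nonneg_left (show b - t - ε ≤ b - a by linarith) hs2pos.le]
  have hab : a < b := by nlinarith [hgap2, hδ, hs2pos]
  -- column embeddings
  obtain ⟨e₁, he₁⟩ : ∃ e₁ : Fin r → Fin d,
      e₁ = fun j => (⟨j.1, lt_of_lt_of_le j.2 hrd.le⟩ : Fin d) := ⟨_, rfl⟩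
  obtain ⟨e₃, he₃⟩ : ∃ e₃ : Fin (d - r) → Fin d,
      e₃ = fun j => (⟨r + j.1, by omega⟩ : Fin d) := ⟨_, rfl⟩
  have he₃inj : Function.Injective e₃ := by
    intro x y hxy
    rw [he₃] at hxy
    simpa [Fin.ext_iff] using hxy
  have hA : firstCols r hrd.le U₁ = U₁.submatrix id e₁ := by
    rw [he₁]; rfl
  have hB : lastCols r U₂ = U₂.submatrix id e₃ := by
    rw [he₃]; rfl
  have hBorth : (lastCols r U₂)ᵀ * lastCols r U₂ = 1 := by
    rw [hB]; exact submatrix_orth hU₂ he₃inj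
  -- eigen relations
  have heigA : Z₁ * firstCols r hrd.le U₁
      = firstCols r hrd.le U₁ * Matrix.diagonal (lam₁ ∘ e₁) := by
    rw [hA]; exact eig_cols hU₁ hZ₁ e₁
  have heigB : (lastCols r U₂)ᵀ * Z₂
      = Matrix.diagonal (lam₂ ∘ e₃) * (lastCols r U₂)ᵀ := by
    rw [hB]; exact eig_rows hU₂ hZ₂ e₃
  -- the Sylvester equation
  have hXR : ((lastCols r U₂)ᵀ * firstCols r hrd.le U₁) * Matrix.diagonal (lam₁ ∘ e₁)
      - Matrix.diagonal (lam₂ ∘ e₃) * ((lastCols r U₂)ᵀ * firstCols r hrd.le U₁)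
      = (lastCols r U₂)ᵀ * ((Z₁ - Z₂) * firstCols r hrd.le U₁) := by
    have h1 : (lastCols r U₂)ᵀ * ((Z₁ - Z₂) * firstCols r hrd.le U₁)
        = (lastCols r U₂)ᵀ * (Z₁ * firstCols r hrd.le U₁)
          - (lastCols r U₂)ᵀ * (Z₂ * firstCols r hrd.le U₁) := by
      rw [Matrix.sub_mul, Matrix.mul_sub]
    have h2 : (lastCols r U₂)ᵀ * (Z₁ * firstCols r hrd.le U₁)
        = ((lastCols r U₂)ᵀ * firstCols r hrd.le U₁) * Matrix.diagonal (lam₁ ∘ e₁) := by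
      rw [heigA, ← Matrix.mul_assoc]
    have h3 : (lastCols r U₂)ᵀ * (Z₂ * firstCols r hrd.le U₁)
        = Matrix.diagonal (lam₂ ∘ e₃) * ((lastCols r U₂)ᵀ * firstCols r hrd.le U₁) := by
      rw [← Matrix.mul_assoc, heigB, Matrix.mul_assoc]
    rw [h1, h2, h3]
  -- eigenvalue bounds
  have hmu : ∀ i : Fin (d - r), |(lam₂ ∘ e₃) i| ≤ a := by
    intro i
    rw [ha, Function.comp_apply]
    apply hsort₂
    rw [he₃]
    exact Fin.mk_le_mk.mpr (by omega)
  have hnu : ∀ j : Fin r, b ≤ |(lam₁ ∘ e₁) j| := by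
    intro j
    rw [hb, Function.comp_apply]
    apply hsort₁
    rw [he₁]
    exact Fin.mk_le_mk.mpr (by omega)
  obtain ⟨hspec, hfrob⟩ := sylvester_bound
    ((lastCols r U₂)ᵀ * firstCols r hrd.le U₁)
    ((lastCols r U₂)ᵀ * ((Z₁ - Z₂) * firstCols r hrd.le U₁))
    (lam₂ ∘ e₃) (lam₁ ∘ e₁) ha0 hbpos hab hmu hnu hXR
  -- norm contractions
  have hspecR : specNorm ((lastCols r U₂)ᵀ * ((Z₁ - Z₂) * firstCols r hrd.le U₁))
      ≤ specNorm ((Z₁ - Z₂) * firstCols r hrd.le U₁) := by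
    calc specNorm ((lastCols r U₂)ᵀ * ((Z₁ - Z₂) * firstCols r hrd.le U₁))
        ≤ specNorm (lastCols r U₂)ᵀ * specNorm ((Z₁ - Z₂) * firstCols r hrd.le U₁) :=
          specNorm_mul_le _ _
      _ ≤ 1 * specNorm ((Z₁ - Z₂) * firstCols r hrd.le U₁) :=
          mul_le_mul_of_nonneg_right (specNorm_transpose_le_one hBorth) (specNorm_nonneg _)
      _ = _ := one_mul _
  have hfrobR : frobNorm ((lastCols r U₂)ᵀ * ((Z₁ - Z₂) * firstCols r hrd.le U₁))
      ≤ frobNorm ((Z₁ - Z₂) * firstCols r hrd.le U₁) := frob_contract hBorth _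
  rw [← hb, ← ht]
  constructor
  · exact final_div hδ (specNorm_nonneg _) hs2pos.le hspecR hspec hgap2
  · exact final_div hδ (frobNorm_nonneg _) hs2pos.le hfrobR hfrob hgap2
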